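/- Let n ≥ k ≥ 2 and r ≥ 3 be integers, and let t = ⌈(r-2)k/(r-1)⌉. If P is a family of k-subsets of [n] such that any two distinct members of P intersect in fewer than t elements (an (n,k,t)-packing), then P is r-focal-free: P does not contain r distinct sets A₀, A₁, ..., A_{r-1} such that every element x of A₀ belongs to at least r-2 of the sets A₁, ..., A_{r-1}. -/
import Mathlib


open Finset

/-- A family of finsets is `r`-focal-free if it contains no `r` distinct sets
`A 0, A 1, ..., A (r-1)` such that every element of the focus `A 0` belongs to
at least `r - 2` of the other sets. -/
def IsFocalFree (r : ℕ) {α : Type*} [DecidableEq α] (F : Finset (Finset α)) : Prop :=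
  ¬ ∃ (A₀ : Finset α) (A : Fin (r - 1) → Finset α), A₀ ∈ F ∧ (∀ i, A i ∈ F) ∧
      Function.Injective A ∧ (∀ i, A i ≠ A₀) ∧
      ∀ x ∈ A₀, r - 2 ≤ (Finset.univ.filter fun i : Fin (r - 1) => x ∈ A i).card

/-- An (n,k,t)-packing is r-focal-free. -/
theorem packing_is_focal_free {n k r t : ℕ} (hk : 2 ≤ k) (hn : k ≤ n) (hr : 3 ≤ r)
    (ht : t = ((r - 2) * k + r - 2) / (r - 1))
    (P : Finset (Finset (Fin n)))
    (hunif : ∀ A ∈ P, A.card = k)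
    (hpack : ∀ A ∈ P, ∀ B ∈ P, A ≠ B → (A ∩ B).card < t) :
    IsFocalFree r P := by
  rintro ⟨A₀, A, hA₀, hA, hinj, hne, hfocal⟩
  have hb : 0 < r - 1 := by omega
  have ha : 0 < (r - 2) * k := Nat.mul_pos (by omega) (by omega)
  obtain ⟨a, haeq⟩ : ∃ a, a = (r - 2) * k := ⟨_, rfl⟩
  have ha' : 1 ≤ a := haeq ▸ ha
  have ht' : t = (a - 1) / (r - 1) + 1 := by
    rw [ht, ← haeq, show a + r - 2 = (a - 1) + (r - 1) by omega,
      Nat.add_div_right _ hb]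
  have htpos : 1 ≤ t := ht' ▸ Nat.le_add_left 1 _
  have key : (t - 1) * (r - 1) ≤ a - 1 := by
    rw [ht', Nat.add_sub_cancel]
    exact Nat.div_mul_le_self _ _
  have hlt : (r - 1) * (t - 1) < (r - 2) * k := by
    rw [← haeq]
    calc (r - 1) * (t - 1) = (t - 1) * (r - 1) := Nat.mul_comm _ _
      _ ≤ a - 1 := key
      _ < a := by omega
  have hAcard : A₀.card = k := hunif A₀ hA₀
  have hterm : ∀ i : Fin (r - 1), (A₀ ∩ A i).card = ∑ x ∈ A₀, if x ∈ A i then 1 else 0 := by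
    intro i
    rw [← Finset.filter_mem_eq_inter, Finset.card_filter]
  have hsum1 : (r - 2) * k ≤ ∑ i : Fin (r - 1), (A₀ ∩ A i).card := by
    calc (r - 2) * k = ∑ _x ∈ A₀, (r - 2) := by rw [Finset.sum_const, hAcard, smul_eq_mul, mul_comm]
      _ ≤ ∑ x ∈ A₀, (Finset.univ.filter fun i : Fin (r - 1) => x ∈ A i).card :=
          Finset.sum_le_sum fun x hx => hfocal x hx
      _ = ∑ x ∈ A₀, ∑ i : Fin (r - 1), if x ∈ A i then 1 else 0 := by
          refine Finset.sum_congr rfl fun x _ => ?_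
          rw [Finset.card_filter]
      _ = ∑ i : Fin (r - 1), ∑ x ∈ A₀, if x ∈ A i then 1 else 0 := Finset.sum_comm
      _ = ∑ i : Fin (r - 1), (A₀ ∩ A i).card := by
          exact Finset.sum_congr rfl fun i _ => (hterm i).symm
  have hsum2 : ∑ i : Fin (r - 1), (A₀ ∩ A i).card ≤ (r - 1) * (t - 1) := by
    calc ∑ i : Fin (r - 1), (A₀ ∩ A i).card ≤ ∑ _i : Fin (r - 1), (t - 1) :=
          Finset.sum_le_sum fun i _ => by
            have := hpack A₀ hA₀ (A i) (hA i) (fun h => hne i h.symm)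
            omega
      _ = (r - 1) * (t - 1) := by simp [Finset.sum_const, Finset.card_univ]
  omega
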